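/- arXiv:2506.14284 — 4 statements merged into one kernel-verified Lean document; each statement's English description precedes it below -/
import Mathlib

section
/- If X is an almost SC*-normal topological space, then for every pair of disjoint sets I and J with I closed and J regularly closed, there exist disjoint gSC*-open sets M and N with I ⊆ M and J ⊆ N. -/
open Set Topology

variable {X : Type*} [TopologicalSpace X]

/-- A set is semi-open if `A ⊆ cl (int A)`. -/
def SemiOpen (A : Set X) : Prop := A ⊆ closure (interior A)

/-- A set is semi-closed if its complement is semi-open. -/
def SemiClosed (A : Set X) : Prop := SemiOpen Aᶜ

/-- Semi-closure: the intersection of all semi-closed sets containing `A`. -/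
def scl (A : Set X) : Set X := ⋂₀ {B : Set X | SemiClosed B ∧ A ⊆ B}

/-- A set is c*-open if `int (cl U) ⊆ U ⊆ cl (int U)`. -/
def CStarOpen (U : Set X) : Prop :=
  interior (closure U) ⊆ U ∧ U ⊆ closure (interior U)

/-- A set is SC*-closed if `scl A ⊆ U` whenever `A ⊆ U` and `U` is c*-open. -/
def SCStarClosed (A : Set X) : Prop :=
  ∀ U : Set X, A ⊆ U → CStarOpen U → scl A ⊆ U

/-- A set is SC*-open if its complement is SC*-closed. -/
def SCStarOpen (A : Set X) : Prop := SCStarClosed Aᶜ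

/-- SC*-closure: the intersection of all SC*-closed sets containing `A`. -/
def SCcl (A : Set X) : Set X := ⋂₀ {B : Set X | SCStarClosed B ∧ A ⊆ B}

/-- SC*-interior: the union of all SC*-open sets contained in `A`. -/
def SCint (A : Set X) : Set X := ⋃₀ {B : Set X | SCStarOpen B ∧ B ⊆ A}

/-- Regularly open: `A = int (cl A)`. -/
def RegOpen (A : Set X) : Prop := A = interior (closure A)

/-- Regularly closed: `A = cl (int A)`. -/
def RegClosed (A : Set X) : Prop := A = closure (interior A)

/-- gSC*-closed: `SCcl A ⊆ U` whenever `A ⊆ U` and `U` is open. -/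
def GSCStarClosed (A : Set X) : Prop :=
  ∀ U : Set X, A ⊆ U → IsOpen U → SCcl A ⊆ U

/-- gSC*-open: the complement is gSC*-closed. -/
def GSCStarOpen (A : Set X) : Prop := GSCStarClosed Aᶜ

/-- SC*g-closed: `SCcl A ⊆ U` whenever `A ⊆ U` and `U` is SC*-open. -/
def SCStarGClosed (A : Set X) : Prop :=
  ∀ U : Set X, A ⊆ U → SCStarOpen U → SCcl A ⊆ U

/-- Regularly SC*-open: there is a regularly open `U` with `U ⊆ A ⊆ SCcl U`. -/
def RegSCStarOpen (A : Set X) : Prop :=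
  ∃ U : Set X, RegOpen U ∧ U ⊆ A ∧ A ⊆ SCcl U

/-- rgSC*-closed: `SCcl A ⊆ U` whenever `A ⊆ U` and `U` is regularly SC*-open. -/
def RGSCStarClosed (A : Set X) : Prop :=
  ∀ U : Set X, A ⊆ U → RegSCStarOpen U → SCcl A ⊆ U

/-- rgSC*-open: the complement is rgSC*-closed. -/
def RGSCStarOpen (A : Set X) : Prop := RGSCStarClosed Aᶜ

/-- α-open: `A ⊆ int (cl (int A))`. -/
def AlphaOpen (A : Set X) : Prop := A ⊆ interior (closure (interior A))

/-- α-closed: the complement is α-open. -/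
def AlphaClosed (A : Set X) : Prop := AlphaOpen Aᶜ

/-- α-closure: the intersection of all α-closed sets containing `A`. -/
def acl (A : Set X) : Set X := ⋂₀ {B : Set X | AlphaClosed B ∧ A ⊆ B}

/-- gα-closed: `acl A ⊆ U` whenever `A ⊆ U` and `U` is α-open. -/
def GAlphaClosed (A : Set X) : Prop :=
  ∀ U : Set X, A ⊆ U → AlphaOpen U → acl A ⊆ U

/-- Regularly α-open: there is a regularly open `U` with `U ⊆ A ⊆ acl U`. -/
def RegAlphaOpen (A : Set X) : Prop :=
  ∃ U : Set X, RegOpen U ∧ U ⊆ A ∧ A ⊆ acl U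

/-- rgα-closed: `acl A ⊆ U` whenever `A ⊆ U` and `U` is regularly α-open. -/
def RGAlphaClosed (A : Set X) : Prop :=
  ∀ U : Set X, A ⊆ U → RegAlphaOpen U → acl A ⊆ U

/-- Almost SC*-normal space. -/
def AlmostSCStarNormal (X : Type*) [TopologicalSpace X] : Prop :=
  ∀ A B : Set X, IsClosed A → RegClosed B → Disjoint A B →
    ∃ U V : Set X, SCStarOpen U ∧ SCStarOpen V ∧ A ⊆ U ∧ B ⊆ V ∧ Disjoint U V

/-- Almost normal space. -/
def AlmostNormal (X : Type*) [TopologicalSpace X] : Prop :=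
  ∀ A B : Set X, IsClosed A → RegClosed B → Disjoint A B →
    ∃ U V : Set X, IsOpen U ∧ IsOpen V ∧ A ⊆ U ∧ B ⊆ V ∧ Disjoint U V

/-- Normal space. -/
def NormalSp (X : Type*) [TopologicalSpace X] : Prop :=
  ∀ A B : Set X, IsClosed A → IsClosed B → Disjoint A B →
    ∃ U V : Set X, IsOpen U ∧ IsOpen V ∧ A ⊆ U ∧ B ⊆ V ∧ Disjoint U V

theorem stmt2 (X : Type*) [TopologicalSpace X] (h : AlmostSCStarNormal X) :
    ∀ I J : Set X, IsClosed I → RegClosed J → Disjoint I J →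
      ∃ M N : Set X, GSCStarOpen M ∧ GSCStarOpen N ∧ I ⊆ M ∧ J ⊆ N ∧ Disjoint M N := by
  intro I J hI hJ hIJ
  obtain ⟨U, V, hU, hV, hIU, hJV, hUV⟩ := h I J hI hJ hIJ
  have key : ∀ W : Set X, SCStarOpen W → GSCStarOpen W := by
    intro W hW O hWO _
    have : SCcl Wᶜ ⊆ Wᶜ := sInter_subset_of_mem (show Wᶜ ∈ {B | SCStarClosed B ∧ Wᶜ ⊆ B} from ⟨hW, subset_rfl⟩)
    exact this.trans hWO
  exact ⟨U, V, key U hU, key V hV, hIU, hJV, hUV⟩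
end

section
/- Let X be a topological space. If for every pair of disjoint sets I and J with I closed and J regularly closed there exist disjoint gSC*-open sets M and N with I ⊆ M and J ⊆ N, then for every pair of disjoint sets I and J with I closed and J regularly closed there exist disjoint rgSC*-open sets M and N with I ⊆ M and J ⊆ N. -/
open Set Topology

variable {X : Type*} [TopologicalSpace X]

lemma regOpen_semiClosed {V : Set X} (hV : RegOpen V) : SemiClosed V := by
  unfold SemiClosed SemiOpen
  rw [interior_compl, closure_compl]
  exact compl_subset_compl.mpr (le_of_eq hV.symm)

lemma regOpen_scStarClosed {V : Set X} (hV : RegOpen V) : SCStarClosed V := by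
  intro U hVU _
  have : scl V ⊆ V := sInter_subset_of_mem ⟨regOpen_semiClosed hV, subset_rfl⟩
  exact this.trans hVU

lemma sccl_of_scStarClosed {V : Set X} (hV : SCStarClosed V) : SCcl V = V := by
  apply subset_antisymm
  · exact sInter_subset_of_mem ⟨hV, subset_rfl⟩
  · exact fun x hx B hB => hB.2 hx

lemma regSCStarOpen_isOpen {U : Set X} (hU : RegSCStarOpen U) : IsOpen U := by
  obtain ⟨V, hV, hVU, hUV⟩ := hU
  rw [sccl_of_scStarClosed (regOpen_scStarClosed hV)] at hUV
  have : U = V := subset_antisymm hUV hVU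
  rw [this, hV]
  exact isOpen_interior

lemma gsc_to_rgsc {M : Set X} (hM : GSCStarOpen M) : RGSCStarOpen M :=
  fun U hU hreg => hM U hU (regSCStarOpen_isOpen hreg)

theorem stmt3 (X : Type*) [TopologicalSpace X]
    (h : ∀ I J : Set X, IsClosed I → RegClosed J → Disjoint I J →
      ∃ M N : Set X, GSCStarOpen M ∧ GSCStarOpen N ∧ I ⊆ M ∧ J ⊆ N ∧ Disjoint M N) :
    ∀ I J : Set X, IsClosed I → RegClosed J → Disjoint I J →
      ∃ M N : Set X, RGSCStarOpen M ∧ RGSCStarOpen N ∧ I ⊆ M ∧ J ⊆ N ∧ Disjoint M N := by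
  intro I J hI hJ hIJ
  obtain ⟨M, N, hM, hN, hIM, hJN, hMN⟩ := h I J hI hJ hIJ
  exact ⟨M, N, gsc_to_rgsc hM, gsc_to_rgsc hN, hIM, hJN, hMN⟩
end

section
/- In any topological space X, every α-closed set is SC*-closed. -/
open Set Topology

variable {X : Type*} [TopologicalSpace X]

theorem stmt13 {X : Type*} [TopologicalSpace X] (A : Set X) (hA : AlphaClosed A) :
    SCStarClosed A := by
  intro U hAU _
  have hsc : SemiClosed A := fun x hx => interior_subset (hA hx)
  exact (sInter_subset_of_mem (show SemiClosed A ∧ A ⊆ A from ⟨hsc, subset_rfl⟩)).trans hAU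
end

section
/- In any topological space X, every rgα-closed set is rgSC*-closed. -/
open Set Topology

variable {X : Type*} [TopologicalSpace X]

theorem stmt15 {X : Type*} [TopologicalSpace X] (A : Set X) (hA : RGAlphaClosed A) :
    RGSCStarClosed A := by
  have halpha : ∀ B : Set X, AlphaClosed B → SCStarClosed B := by
    intro B hB U hBU _
    have hsc : SemiClosed B := fun x hx =>
      interior_subset (hB hx)
    exact fun x hx => hBU (hx B ⟨hsc, subset_rfl⟩)
  have hsub : ∀ C : Set X, SCcl C ⊆ acl (X := X) C := by
    intro C x hx B hB
    exact hx B ⟨halpha B hB.1, hB.2⟩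
  intro U hAU hU
  obtain ⟨V, hV, hVU, hUV⟩ := hU
  have : RegAlphaOpen U := ⟨V, hV, hVU, hUV.trans (hsub V)⟩
  exact (hsub A).trans (hA U hAU this)
end
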